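/- Fix θ ∈ (1/2, 5/2). There exists a constant C such that for all k ∈ ℕ with k ≥ 1, Σ_{ℓ ≥ 1, ℓ ≠ k} ℓ^{4-2θ} / ((ℓ-k)²(ℓ+k)²) ≤ C (1 + k²)^{1-θ}. -/

import Mathlib

set_option maxHeartbeats 1000000

lemma basel_aux' : ∀ n : ℕ, ∑ j ∈ Finset.range (n+1), (1:ℝ)/((j:ℝ)+1)^2 ≤ 2 - 1/((n:ℝ)+1) := by
  intro n
  induction n with
  | zero => norm_num
  | succ n ih =>
    rw [Finset.sum_range_succ]
    push_cast
    have h : (0:ℝ) < (n:ℝ)+1 := by positivity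
    have key : (1:ℝ)/((n:ℝ)+1+1)^2 ≤ 1/((n:ℝ)+1) - 1/((n:ℝ)+1+1) := by
      rw [div_sub_div _ _ (ne_of_gt h) (by positivity), div_le_div_iff₀ (by positivity) (by positivity)]
      nlinarith
    push_cast at ih
    linarith

lemma basel_aux (n : ℕ) : ∑ j ∈ Finset.range n, (1:ℝ)/((j:ℝ)+1)^2 ≤ 2 := by
  cases n with
  | zero => norm_num
  | succ n =>
    have h : (0:ℝ) < (n:ℝ)+1 := by positivity
    have h2 : (0:ℝ) ≤ 1/((n:ℝ)+1) := by positivity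
    linarith [basel_aux' n]

/-- the key summation estimate: for `θ ∈ (1/2, 5/2)` there is `C` with
`Σ_{ℓ ≥ 1, ℓ ≠ k} ℓ^{4-2θ}/((ℓ-k)²(ℓ+k)²) ≤ C (1+k²)^{1-θ}` for all `k ≥ 1`. -/
theorem sum_estimate_neumann_derivative (θ : ℝ) (hθ : θ ∈ Set.Ioo (1/2 : ℝ) (5/2)) :
    ∃ C : ℝ, ∀ k : ℕ, 1 ≤ k →
      (∑' l : ℕ, if 1 ≤ l ∧ l ≠ k then
          (l : ℝ) ^ (4 - 2 * θ) / (((l : ℝ) - (k : ℝ)) ^ 2 * ((l : ℝ) + (k : ℝ)) ^ 2)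
        else 0)
        ≤ C * (1 + (k : ℝ) ^ 2) ^ (1 - θ) := by
  obtain ⟨hθ1, hθ2⟩ := hθ
  set a : ℝ := 4 - 2*θ with ha
  set e : ℝ := 2 - 2*θ with he
  set p : ℝ := 2 * min θ 1 with hp
  have hp1 : 1 < p := by
    rcases le_total θ 1 with h | h
    · rw [hp, min_eq_left h]; linarith
    · rw [hp, min_eq_right h]; norm_num
  have hTs : Summable (fun n : ℕ => (((n:ℝ)) ^ p)⁻¹) := Real.summable_nat_rpow_inv.2 hp1
  set T : ℝ := ∑' n : ℕ, (((n:ℝ)) ^ p)⁻¹ with hT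
  have hT0 : 0 ≤ T := tsum_nonneg (fun n => by positivity)
  refine ⟨(16 + 32 + 4*T) * 4, ?_⟩
  intro k hk
  set K : ℝ := (k:ℝ) with hKdef
  have hK1 : (1:ℝ) ≤ K := by rw [hKdef]; exact_mod_cast hk
  have hK0 : (0:ℝ) < K := lt_of_lt_of_le one_pos hK1
  set g : ℕ → ℝ := fun l => if 1 ≤ l ∧ l ≠ k then
      (l : ℝ) ^ a / (((l : ℝ) - K) ^ 2 * ((l : ℝ) + K) ^ 2) else 0 with hg
  set c1 : ℝ := 4*(K^a+1) * K^(-4:ℝ) with hc1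
  have hc10 : 0 ≤ c1 := by positivity
  set h1 : ℕ → ℝ := fun l => if 1 ≤ l ∧ 2*l ≤ k then c1 else 0 with hh1
  set h2 : ℕ → ℝ := fun l => if k < 2*l ∧ l < 2*k ∧ l ≠ k then 8*K^e / (((l:ℝ) - K)^2) else 0 with hh2
  set h3 : ℕ → ℝ := fun l => if 2*k ≤ l then 4*K^e * (((l:ℝ))^p)⁻¹ else 0 with hh3
  have hg0 : ∀ l, 0 ≤ g l := by
    intro l; rw [hg]; dsimp only; split
    · positivity
    · exact le_refl 0
  have h10 : ∀ l, 0 ≤ h1 l := by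
    intro l; rw [hh1]; dsimp only; split
    · exact hc10
    · exact le_refl 0
  have h20 : ∀ l, 0 ≤ h2 l := by
    intro l; rw [hh2]; dsimp only; split
    · positivity
    · exact le_refl 0
  have h30 : ∀ l, 0 ≤ h3 l := by
    intro l; rw [hh3]; dsimp only; split
    · positivity
    · exact le_refl 0
  -- pointwise bound
  have hle : ∀ l, g l ≤ h1 l + h2 l + h3 l := by
    intro l
    rw [hg]; dsimp only
    split
    case isFalse => have := h10 l; have := h20 l; have := h30 l; linarith
    case isTrue hcond =>
      obtain ⟨hl1, hlk⟩ := hcond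
      have hL1 : (1:ℝ) ≤ (l:ℝ) := by exact_mod_cast hl1
      have hL0 : (0:ℝ) < (l:ℝ) := lt_of_lt_of_le one_pos hL1
      have hLK : (l:ℝ) ≠ K := by
        rw [hKdef]; exact_mod_cast hlk
      rcases le_or_gt (2*l) k with hA | hA
      · -- region A
        have hbound : (l:ℝ) ^ a / (((l:ℝ) - K) ^ 2 * ((l:ℝ) + K) ^ 2) ≤ h1 l := by
          rw [hh1]; dsimp only; rw [if_pos ⟨hl1, hA⟩, hc1]
          have h2L : 2*(l:ℝ) ≤ K := by rw [hKdef]; exact_mod_cast hA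
          have hnum : (l:ℝ)^a ≤ K^a + 1 := by
            rcases le_total 0 a with h | h
            · have : (l:ℝ)^a ≤ K^a :=
                Real.rpow_le_rpow hL0.le (by linarith) h
              have : (0:ℝ) < K^a := Real.rpow_pos_of_pos hK0 a
              linarith [Real.rpow_le_rpow hL0.le (show (l:ℝ) ≤ K by linarith) ‹0 ≤ a›]
            · have h1' : (l:ℝ)^a ≤ (1:ℝ)^a :=
                Real.rpow_le_rpow_of_nonpos one_pos hL1 h
              rw [Real.one_rpow] at h1'
              have : (0:ℝ) ≤ K^a := (Real.rpow_pos_of_pos hK0 a).le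
              linarith
          have hd1 : (K/2)^2 ≤ ((l:ℝ) - K)^2 := by nlinarith
          have hd2 : K^2 ≤ ((l:ℝ) + K)^2 := by nlinarith
          have hden : K^4/4 ≤ ((l:ℝ) - K)^2 * ((l:ℝ) + K)^2 := by nlinarith [sq_nonneg ((l:ℝ)-K), sq_nonneg ((l:ℝ)+K)]
          have step : (l:ℝ) ^ a / (((l:ℝ) - K) ^ 2 * ((l:ℝ) + K) ^ 2) ≤ (K^a+1) / (K^4/4) :=
            div_le_div₀ (by positivity) hnum (by positivity) hden
          have hK4 : K^(-4:ℝ) = (K^(4:ℕ))⁻¹ := by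
            rw [show (-4:ℝ) = -((4:ℕ):ℝ) by norm_num, Real.rpow_neg hK0.le, Real.rpow_natCast]
          rw [hK4]
          have hK4ne : (K^(4:ℕ)) ≠ 0 := by positivity
          calc (l:ℝ) ^ a / (((l:ℝ) - K) ^ 2 * ((l:ℝ) + K) ^ 2) ≤ (K^a+1) / (K^4/4) := step
            _ = 4*(K^a+1) * (K^(4:ℕ))⁻¹ := by field_simp
        have := h20 l; have := h30 l; linarith
      · rcases lt_or_ge l (2*k) with hB | hC
        · -- region B
          have hbound : (l:ℝ) ^ a / (((l:ℝ) - K) ^ 2 * ((l:ℝ) + K) ^ 2) ≤ h2 l := by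
            rw [hh2]; dsimp only; rw [if_pos ⟨hA, hB, hlk⟩]
            have hKL2 : K < 2*(l:ℝ) := by rw [hKdef]; exact_mod_cast hA
            have hL2K : (l:ℝ) < 2*K := by rw [hKdef]; exact_mod_cast hB
            have hKa0 : (0:ℝ) < K^a := Real.rpow_pos_of_pos hK0 a
            have hnum : (l:ℝ)^a ≤ 8*K^a := by
              rcases le_total 0 a with h | h
              · have s1 : (l:ℝ)^a ≤ (2*K)^a := Real.rpow_le_rpow hL0.le hL2K.le h
                rw [Real.mul_rpow (by norm_num) hK0.le] at s1
                have s2 : (2:ℝ)^a ≤ (2:ℝ)^((3:ℕ):ℝ) :=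
                  Real.rpow_le_rpow_of_exponent_le (by norm_num) (by push_cast; rw [ha]; linarith)
                rw [Real.rpow_natCast] at s2
                norm_num at s2
                nlinarith
              · have s1 : (l:ℝ)^a ≤ (K/2)^a :=
                  Real.rpow_le_rpow_of_nonpos (by positivity) (by linarith) h
                rw [Real.div_rpow hK0.le (by norm_num)] at s1
                have s2 : (2:ℝ)^(-1:ℝ) ≤ (2:ℝ)^a :=
                  Real.rpow_le_rpow_of_exponent_le (by norm_num) (by rw [ha]; linarith)
                rw [Real.rpow_neg_one] at s2
                have s3 : K^a/(2:ℝ)^a ≤ K^a/(2:ℝ)⁻¹ :=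
                  div_le_div_of_nonneg_left hKa0.le (by norm_num) s2
                rw [show K ^ a / (2:ℝ)⁻¹ = 2 * K^a from by ring] at s3
                linarith
            have hLKsq : (0:ℝ) < ((l:ℝ) - K)^2 := by
              have : (l:ℝ) - K ≠ 0 := sub_ne_zero.2 hLK
              positivity
            have hden : ((l:ℝ) - K)^2 * K^2 ≤ ((l:ℝ) - K)^2 * ((l:ℝ) + K)^2 := by
              have : K^2 ≤ ((l:ℝ) + K)^2 := by nlinarith
              exact mul_le_mul_of_nonneg_left this hLKsq.le
            have step : (l:ℝ) ^ a / (((l:ℝ) - K) ^ 2 * ((l:ℝ) + K) ^ 2) ≤ (8*K^a) / (((l:ℝ) - K)^2 * K^2) :=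
              div_le_div₀ (by positivity) hnum (by positivity) hden
            have hea : K^e * K^((2:ℕ):ℝ) = K^a := by
              rw [← Real.rpow_add hK0]; congr 1; push_cast; rw [he, ha]; ring
            rw [Real.rpow_natCast] at hea
            calc (l:ℝ) ^ a / (((l:ℝ) - K) ^ 2 * ((l:ℝ) + K) ^ 2)
                ≤ (8*K^a) / (((l:ℝ) - K)^2 * K^2) := step
              _ = 8*K^e / (((l:ℝ) - K)^2) := by
                  rw [← hea]; field_simp
          have := h10 l; have := h30 l; linarith
        · -- region C
          have hbound : (l:ℝ) ^ a / (((l:ℝ) - K) ^ 2 * ((l:ℝ) + K) ^ 2) ≤ h3 l := by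
            rw [hh3]; dsimp only; rw [if_pos hC]
            have h2KL : 2*K ≤ (l:ℝ) := by
              rw [hKdef]; exact_mod_cast hC
            have d1 : ((l:ℝ)/2)^2 ≤ ((l:ℝ) - K)^2 := by nlinarith
            have d2 : ((l:ℝ))^2 ≤ ((l:ℝ) + K)^2 := by nlinarith
            have hden : (l:ℝ)^4/4 ≤ ((l:ℝ) - K)^2 * ((l:ℝ) + K)^2 := by
              nlinarith [mul_le_mul d1 d2 (sq_nonneg ((l:ℝ))) (sq_nonneg ((l:ℝ) - K))]
            have step : (l:ℝ) ^ a / (((l:ℝ) - K) ^ 2 * ((l:ℝ) + K) ^ 2) ≤ (l:ℝ)^a / ((l:ℝ)^4/4) :=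
              div_le_div_of_nonneg_left (by positivity) (by positivity) hden
            have key : (l:ℝ)^a / ((l:ℝ)^4/4) = 4 * (l:ℝ)^(-(2*θ)) := by
              have h4 : (l:ℝ)^a / (l:ℝ)^((4:ℕ):ℝ) = (l:ℝ)^(a - ((4:ℕ):ℝ)) :=
                (Real.rpow_sub hL0 _ _).symm
              calc (l:ℝ)^a / ((l:ℝ)^4/4) = 4*((l:ℝ)^a/(l:ℝ)^((4:ℕ):ℝ)) := by
                    rw [Real.rpow_natCast]
                    have h4ne : ((l:ℝ)^(4:ℕ)) ≠ 0 := by positivity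
                    field_simp
                _ = 4*(l:ℝ)^(a-((4:ℕ):ℝ)) := by rw [h4]
                _ = 4*(l:ℝ)^(-(2*θ)) := by
                    rw [show a - ((4:ℕ):ℝ) = -(2*θ) from by push_cast; rw [ha]; ring]
            have tail : (l:ℝ)^(-(2*θ)) ≤ K^e * (((l:ℝ))^p)⁻¹ := by
              rcases le_total θ 1 with h | h
              · have hpe : p = 2*θ := by rw [hp, min_eq_left h]
                have : (l:ℝ)^(-(2*θ)) = (((l:ℝ))^p)⁻¹ := by
                  rw [hpe, Real.rpow_neg hL0.le]
                rw [this]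
                have hKe1 : (1:ℝ) ≤ K^e := Real.one_le_rpow hK1 (by rw [he]; linarith)
                nlinarith [inv_nonneg.2 (Real.rpow_nonneg hL0.le p)]
              · have hpe : p = 2 := by rw [hp, min_eq_right h]; ring
                have hKl : K ≤ (l:ℝ) := by linarith
                have hLe : (l:ℝ)^e ≤ K^e :=
                  Real.rpow_le_rpow_of_nonpos hK0 hKl (by rw [he]; linarith)
                have split : (l:ℝ)^(-(2*θ)) = (l:ℝ)^e * (((l:ℝ))^p)⁻¹ := by
                  rw [hpe, ← Real.rpow_neg hL0.le, ← Real.rpow_add hL0]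
                  congr 1
                  rw [he]; ring
                rw [split]
                exact mul_le_mul_of_nonneg_right hLe (inv_nonneg.2 (Real.rpow_nonneg hL0.le p))
            calc (l:ℝ) ^ a / (((l:ℝ) - K) ^ 2 * ((l:ℝ) + K) ^ 2)
                ≤ (l:ℝ)^a / ((l:ℝ)^4/4) := step
              _ = 4 * (l:ℝ)^(-(2*θ)) := key
              _ ≤ 4 * (K^e * (((l:ℝ))^p)⁻¹) := by linarith
              _ = 4*K^e * (((l:ℝ))^p)⁻¹ := by ring
          have := h10 l; have := h20 l; linarith
  -- summability
  have hv1 : ∀ l ∉ Finset.range (k+1), h1 l = 0 := by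
    intro l hl
    rw [Finset.mem_range, not_lt] at hl
    rw [hh1]; dsimp only
    rw [if_neg]; rintro ⟨-, h2l⟩; omega
  have hv2 : ∀ l ∉ Finset.range (2*k), h2 l = 0 := by
    intro l hl
    rw [Finset.mem_range, not_lt] at hl
    rw [hh2]; dsimp only
    rw [if_neg]; rintro ⟨-, h2l, -⟩; omega
  have S1 : Summable h1 := summable_of_ne_finset_zero hv1
  have S2 : Summable h2 := summable_of_ne_finset_zero hv2
  have hle3 : ∀ l, h3 l ≤ 4*K^e * (((l:ℝ))^p)⁻¹ := by
    intro l; rw [hh3]; dsimp only; split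
    · exact le_refl _
    · positivity
  have S3big : Summable (fun l : ℕ => 4*K^e * (((l:ℝ))^p)⁻¹) := hTs.mul_left _
  have S3 : Summable h3 := Summable.of_nonneg_of_le h30 hle3 S3big
  have SM : Summable (fun l => h1 l + h2 l + h3 l) := (S1.add S2).add S3
  have Sg : Summable g := Summable.of_nonneg_of_le hg0 hle SM
  -- bound for h1
  have B1 : ∑' l, h1 l ≤ 16 * K^e := by
    rw [tsum_eq_sum hv1]
    have hsum : ∑ l ∈ Finset.range (k+1), h1 l ≤ ∑ _l ∈ Finset.range (k+1), c1 := by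
      apply Finset.sum_le_sum
      intro i _
      rw [hh1]; dsimp only; split
      · exact le_refl _
      · exact hc10
    rw [Finset.sum_const, Finset.card_range, nsmul_eq_mul] at hsum
    have hK1' : (1:ℝ) ≤ (k:ℝ) := by exact_mod_cast hk
    have hkc : ((k+1:ℕ):ℝ) ≤ 2*K := by rw [hKdef]; push_cast; linarith
    have step2 : ((k+1:ℕ):ℝ) * c1 ≤ 2*K*c1 := mul_le_mul_of_nonneg_right hkc hc10
    have e0 : K^(1:ℝ) = K := Real.rpow_one K
    have e1 : K^(1:ℝ) * (K^a * K^(-4:ℝ)) = K^(1-2*θ) := by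
      rw [← Real.rpow_add hK0, ← Real.rpow_add hK0]; congr 1; rw [ha]; ring
    have e2 : K^(1:ℝ) * K^(-4:ℝ) = K^(-3:ℝ) := by
      rw [← Real.rpow_add hK0]; congr 1; norm_num
    have eq3 : 2*K*c1 = 8*(K^(1-2*θ) + K^(-3:ℝ)) := by
      rw [hc1, ← e1, ← e2, e0]; ring
    have le1 : K^(1-2*θ) ≤ K^e := Real.rpow_le_rpow_of_exponent_le hK1 (by rw [he]; linarith)
    have le2 : K^(-3:ℝ) ≤ K^e := Real.rpow_le_rpow_of_exponent_le hK1 (by rw [he]; linarith)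
    have hcast : ((k+1:ℕ):ℝ) = (k:ℝ)+1 := by push_cast; ring
    rw [hcast] at hsum step2
    exact ((hsum.trans step2).trans_eq eq3).trans (by linarith)
  -- bound for h2
  set q : ℕ → ℝ := fun l => if l ≠ k then (((l:ℝ) - K)^2)⁻¹ else 0 with hq
  have hq0 : ∀ l, 0 ≤ q l := by
    intro l; rw [hq]; dsimp only; split
    · positivity
    · exact le_refl 0
  have part1 : ∑ l ∈ Finset.range k, q l ≤ 2 := by
    have hr : ∀ j ∈ Finset.range k, q (k-1-j) = 1/((j:ℝ)+1)^2 := by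
      intro j hj; rw [Finset.mem_range] at hj
      rw [hq]; dsimp only
      rw [if_pos (by omega)]
      have hc : ((k-1-j:ℕ):ℝ) = K - 1 - (j:ℝ) := by
        rw [hKdef, show k-1-j = k-(1+j) from by omega, Nat.cast_sub (by omega)]
        push_cast; ring
      rw [hc, show (K-1-(j:ℝ)-K)^2 = ((j:ℝ)+1)^2 from by ring, one_div]
    calc ∑ l ∈ Finset.range k, q l = ∑ j ∈ Finset.range k, q (k-1-j) :=
          (Finset.sum_range_reflect q k).symm
      _ = ∑ j ∈ Finset.range k, 1/((j:ℝ)+1)^2 := Finset.sum_congr rfl hr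
      _ ≤ 2 := basel_aux k
  have part2 : ∑ l ∈ Finset.Ico k (2*k), q l ≤ 2 := by
    rw [Finset.sum_eq_sum_Ico_succ_bot (by omega : k < 2*k) q]
    have hqk : q k = 0 := by rw [hq]; dsimp only; rw [if_neg (by simp)]
    rw [hqk, zero_add, Finset.sum_Ico_eq_sum_range]
    have hr2 : ∀ j ∈ Finset.range (2*k - (k+1)), q (k+1+j) = 1/((j:ℝ)+1)^2 := by
      intro j _
      rw [hq]; dsimp only; rw [if_pos (by omega)]
      rw [show (((k+1+j:ℕ)):ℝ) - K = (j:ℝ)+1 from by rw [hKdef]; push_cast; ring, one_div]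
    rw [Finset.sum_congr rfl hr2]
    exact basel_aux _
  have hq4 : ∑ l ∈ Finset.range (2*k), q l ≤ 4 := by
    have hsplit : ∑ l ∈ Finset.range k, q l + ∑ l ∈ Finset.Ico k (2*k), q l
        = ∑ l ∈ Finset.range (2*k), q l := by
      simp only [Finset.range_eq_Ico]
      exact Finset.sum_Ico_consecutive q (Nat.zero_le k) (by omega)
    linarith
  have B2 : ∑' l, h2 l ≤ 32 * K^e := by
    rw [tsum_eq_sum hv2]
    have hb : ∀ i ∈ Finset.range (2*k), h2 i ≤ 8*K^e * q i := by
      intro i _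
      rw [hh2, hq]; dsimp only
      by_cases hik : i ≠ k
      · rw [if_pos hik]
        split
        · rw [div_eq_mul_inv]
        · positivity
      · rw [if_neg hik, if_neg (by tauto), mul_zero]
    calc ∑ i ∈ Finset.range (2*k), h2 i ≤ ∑ i ∈ Finset.range (2*k), 8*K^e * q i :=
          Finset.sum_le_sum hb
      _ = 8*K^e * ∑ i ∈ Finset.range (2*k), q i := by rw [← Finset.mul_sum]
      _ ≤ 8*K^e * 4 := mul_le_mul_of_nonneg_left hq4 (by positivity)
      _ = 32*K^e := by ring
  have B3 : ∑' l, h3 l ≤ 4*T*K^e := by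
    have t3 := Summable.tsum_le_tsum hle3 S3 S3big
    rw [tsum_mul_left] at t3
    calc ∑' l, h3 l ≤ 4*K^e*T := t3
      _ = 4*T*K^e := by ring
  -- final rpow comparison
  have Fin4 : K^e ≤ 4*(1+K^2)^(1-θ) := by
    have hKe : K^e = (K^2)^(1-θ) := by
      rw [← Real.rpow_natCast K 2, ← Real.rpow_mul hK0.le]
      congr 1; rw [he]; push_cast; ring
    rcases le_total θ 1 with h | h
    · rw [hKe]
      have hmono : (K^2)^(1-θ) ≤ (1+K^2)^(1-θ) :=
        Real.rpow_le_rpow (by positivity) (by linarith) (by linarith)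
      have h0 : (0:ℝ) ≤ (1+K^2)^(1-θ) := Real.rpow_nonneg (by positivity) _
      linarith
    · have hA : (0:ℝ) < (K^2)^(θ-1) := Real.rpow_pos_of_pos (by positivity) _
      have hB : (0:ℝ) < (1+K^2)^(θ-1) := Real.rpow_pos_of_pos (by positivity) _
      have hBA : (1+K^2)^(θ-1) ≤ 4*(K^2)^(θ-1) := by
        have s1 : (1+K^2)^(θ-1) ≤ (2*K^2)^(θ-1) :=
          Real.rpow_le_rpow (by positivity) (by nlinarith) (by linarith)
        rw [Real.mul_rpow (by norm_num) (by positivity)] at s1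
        have s2 : (2:ℝ)^(θ-1) ≤ (2:ℝ)^((2:ℕ):ℝ) :=
          Real.rpow_le_rpow_of_exponent_le (by norm_num) (by push_cast; linarith)
        rw [Real.rpow_natCast] at s2
        norm_num at s2
        nlinarith
      have hKeinv : K^e = ((K^2)^(θ-1))⁻¹ := by
        rw [hKe, show (1-θ) = -(θ-1) from by ring, Real.rpow_neg (by positivity)]
      have hBinv : (1+K^2)^(1-θ) = ((1+K^2)^(θ-1))⁻¹ := by
        rw [show (1-θ) = -(θ-1) from by ring, Real.rpow_neg (by positivity)]
      rw [hKeinv, hBinv, inv_eq_one_div, inv_eq_one_div, mul_one_div,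
        div_le_div_iff₀ hA hB]
      linarith
  -- assemble
  have main : tsum g ≤ (16+32+4*T) * K^e := by
    have t1 : tsum g ≤ ∑' l, (h1 l + h2 l + h3 l) := Summable.tsum_le_tsum hle Sg SM
    rw [Summable.tsum_add (S1.add S2) S3, Summable.tsum_add S1 S2] at t1
    nlinarith [Real.rpow_nonneg hK0.le e]
  calc tsum g ≤ (16+32+4*T)*K^e := main
    _ ≤ (16+32+4*T)*(4*(1+K^2)^(1-θ)) := mul_le_mul_of_nonneg_left Fin4 (by linarith)
    _ = (16+32+4*T)*4*(1+K^2)^(1-θ) := by ring
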